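/- Let (F,G) be a cross-Sperner pair of subsets of [n] with |I(F,G)| = m(n), and let X = ∩_{A∈F} A and Y = ∩_{B∈G} B. Then X ∩ Y = ∅. -/
import Mathlib


open Finset

def CrossSperner {α : Type*} [DecidableEq α] (F G : Finset (Finset α)) : Prop :=
  ∀ A ∈ F, ∀ B ∈ G, ¬ A ⊆ B ∧ ¬ B ⊆ A

def interFam {α : Type*} [DecidableEq α] (F G : Finset (Finset α)) : Finset (Finset α) :=
  (F ×ˢ G).image fun p => p.1 ∩ p.2

noncomputable def mSperner (n : ℕ) : ℕ :=
  sSup {k | ∃ F G : Finset (Finset (Fin n)), CrossSperner F G ∧ k = (interFam F G).card}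

theorem stmt9 (n : ℕ) (hn : 1 < n) (F G : Finset (Finset (Fin n)))
    (hFG : CrossSperner F G) (hFne : F.Nonempty) (hGne : G.Nonempty)
    (hmax : (interFam F G).card = mSperner n) :
    Disjoint (F.inf id) (G.inf id) := by
  rw [Finset.disjoint_left]
  intro x hxF hxG
  have hxA : ∀ A ∈ F, x ∈ A := fun A hA => (Finset.inf_le hA : F.inf id ≤ id A) hxF
  have hxB : ∀ B ∈ G, x ∈ B := fun B hB => (Finset.inf_le hB : G.inf id ≤ id B) hxG
  set H : Finset (Finset (Fin n)) := G ∪ G.image (fun B => B.erase x) with hH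
  have hCS : CrossSperner F H := by
    intro A hA B hB
    rcases Finset.mem_union.1 hB with hB | hB
    · exact hFG A hA B hB
    · rcases Finset.mem_image.1 hB with ⟨B', hB', rfl⟩
      constructor
      · intro hsub
        exact (Finset.notMem_erase x B') (hsub (hxA A hA))
      · intro hsub
        have : B' ⊆ A := by
          intro y hy
          by_cases hyx : y = x
          · exact hyx ▸ hxA A hA
          · exact hsub (Finset.mem_erase.2 ⟨hyx, hy⟩)
        exact (hFG A hA B' hB').2 this
  -- every member of interFam F G contains x
  have hxI : ∀ C ∈ interFam F G, x ∈ C := by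
    intro C hC
    rcases Finset.mem_image.1 hC with ⟨⟨A, B⟩, hp, rfl⟩
    rcases Finset.mem_product.1 hp with ⟨hA, hB⟩
    exact Finset.mem_inter.2 ⟨hxA A hA, hxB B hB⟩
  have hsub1 : interFam F G ⊆ interFam F H := by
    intro C hC
    rcases Finset.mem_image.1 hC with ⟨⟨A, B⟩, hp, rfl⟩
    rcases Finset.mem_product.1 hp with ⟨hA, hB⟩
    exact Finset.mem_image.2 ⟨⟨A, B⟩, Finset.mem_product.2 ⟨hA, Finset.mem_union_left _ hB⟩, rfl⟩
  have hsub2 : (interFam F G).image (fun C => C.erase x) ⊆ interFam F H := by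
    intro C hC
    rcases Finset.mem_image.1 hC with ⟨C', hC', rfl⟩
    rcases Finset.mem_image.1 hC' with ⟨⟨A, B⟩, hp, rfl⟩
    rcases Finset.mem_product.1 hp with ⟨hA, hB⟩
    refine Finset.mem_image.2 ⟨⟨A, B.erase x⟩, Finset.mem_product.2
      ⟨hA, Finset.mem_union_right _ (Finset.mem_image_of_mem _ hB)⟩, ?_⟩
    ext y
    simp only [Finset.mem_inter, Finset.mem_erase]
    tauto
  have hdisj : Disjoint (interFam F G) ((interFam F G).image (fun C => C.erase x)) := by
    rw [Finset.disjoint_left]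
    intro C hC hC'
    rcases Finset.mem_image.1 hC' with ⟨C', hC', hEq⟩
    exact Finset.notMem_erase x C' (hEq ▸ hxI C hC)
  have hinj : ((interFam F G).image (fun C => C.erase x)).card = (interFam F G).card := by
    apply Finset.card_image_of_injOn
    intro C hC D hD hEq
    simp only [Finset.mem_coe] at hC hD
    have : insert x (C.erase x) = insert x (D.erase x) := congrArg (insert x) hEq
    rwa [Finset.insert_erase (hxI C hC), Finset.insert_erase (hxI D hD)] at this
  have hcard : 2 * (interFam F G).card ≤ (interFam F H).card := by
    have := Finset.card_le_card (Finset.union_subset hsub1 hsub2)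
    rwa [Finset.card_union_of_disjoint hdisj, hinj, ← two_mul] at this
  have hbdd : BddAbove {k | ∃ F G : Finset (Finset (Fin n)),
      CrossSperner F G ∧ k = (interFam F G).card} := by
    refine ⟨Fintype.card (Finset (Fin n)), ?_⟩
    rintro k ⟨F', G', _, rfl⟩
    exact Finset.card_le_univ _
  have hle : (interFam F H).card ≤ mSperner n :=
    le_csSup hbdd ⟨F, H, hCS, rfl⟩
  have hpos : 0 < (interFam F G).card := by
    obtain ⟨A, hA⟩ := hFne
    obtain ⟨B, hB⟩ := hGne
    exact Finset.card_pos.2 ⟨A ∩ B, Finset.mem_image.2 ⟨⟨A, B⟩,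
      Finset.mem_product.2 ⟨hA, hB⟩, rfl⟩⟩
  omega
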